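/- If μ is a finitely additive probability measure on the Borel σ-algebra of [0,1] that is invariant for CM1 (Aμ = μ) and satisfies μ((0,1)) = 1, then ∫_{(0,1)} (1−x) μ(dx) = 0. -/
import Mathlib


open MeasureTheory Set Filter Topology Function

/-- A bounded finitely additive set function on the σ-algebra. -/
def IsFinAdd {X : Type*} [MeasurableSpace X] (μ : Set X → ℝ) : Prop :=
  μ ∅ = 0 ∧ ∀ E F : Set X, MeasurableSet E → MeasurableSet F → Disjoint E F →
    μ (E ∪ F) = μ E + μ F

/-- Nonnegativity on measurable sets. -/
def IsNonnegSF {X : Type*} [MeasurableSpace X] (μ : Set X → ℝ) : Prop :=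
  ∀ E : Set X, MeasurableSet E → 0 ≤ μ E

/-- Countable additivity on the σ-algebra. -/
def IsCtblAdd {X : Type*} [MeasurableSpace X] (μ : Set X → ℝ) : Prop :=
  ∀ E : ℕ → Set X, (∀ n, MeasurableSet (E n)) → Pairwise (Disjoint on E) →
    HasSum (fun n => μ (E n)) (μ (⋃ n, E n))

/-- A nonnegative finitely additive measure is purely finitely additive if the only
countably additive measure `lam` with `0 ≤ lam ≤ μ` is `lam = 0`. -/
def IsPurelyFinAdd {X : Type*} [MeasurableSpace X] (μ : Set X → ℝ) : Prop :=
  ∀ lam : Set X → ℝ, IsFinAdd lam → IsCtblAdd lam →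
    (∀ E, MeasurableSet E → 0 ≤ lam E) → (∀ E, MeasurableSet E → lam E ≤ μ E) →
    ∀ E, MeasurableSet E → lam E = 0

/-- The integral of a bounded measurable function with respect to a (finitely additive)
set function, defined by the layer-cake formula. -/
noncomputable def faIntegral {X : Type*} [MeasurableSpace X] (μ : Set X → ℝ) (f : X → ℝ) : ℝ :=
  (∫ t in Set.Ioi (0:ℝ), μ {x | t < f x}) - (∫ t in Set.Ioi (0:ℝ), μ {x | f x < -t})

/-- The Dirac measure at `y`, as a set function. -/
noncomputable def diracSF (y : ℝ) (E : Set ℝ) : ℝ := E.indicator (fun _ => (1:ℝ)) y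

/-- The transition function of CM1: `p(x,·) = x·δ_{x²} + (1-x)·δ₀` on `(0,1)`,
`p(0,·) = δ₀`, `p(1,·) = δ₁` (the formula below specializes correctly at `0` and `1`). -/
noncomputable def p1 (x : ℝ) (E : Set ℝ) : ℝ :=
  x * diracSF (x ^ 2) E + (1 - x) * diracSF 0 E

/-- The transition function of CM2: `p(x,·) = (1-x)·δ_{x²} + x·δ₀` on `(0,1)`,
`p(0,·) = δ₀`, `p(1,·) = δ₁`. -/
noncomputable def p2 (x : ℝ) (E : Set ℝ) : ℝ :=
  if x = 1 then diracSF 1 E else (1 - x) * diracSF (x ^ 2) E + x * diracSF 0 E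

/-- The transition function of CM3: the CM1 rule on `[0,1/2]`, the CM2 rule on `(1/2,1)`,
`p(1,·) = δ₁`. -/
noncomputable def p3 (x : ℝ) (E : Set ℝ) : ℝ :=
  if x = 1 then diracSF 1 E
  else if x ≤ 1 / 2 then x * diracSF (x ^ 2) E + (1 - x) * diracSF 0 E
  else (1 - x) * diracSF (x ^ 2) E + x * diracSF 0 E

/-- The `n`-step transition function of CM1 (`p1n 0` is the identity kernel, and
`p1n (n+1) x E = ∫ p1n n (y,E) p(x,dy)` is the integral convolution). -/
noncomputable def p1n : ℕ → ℝ → Set ℝ → ℝ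
  | 0 => fun x E => diracSF x E
  | n + 1 => fun x E => faIntegral (p1 x) fun y => p1n n y E

/-- The `n`-step transition function of CM2. -/
noncomputable def p2n : ℕ → ℝ → Set ℝ → ℝ
  | 0 => fun x E => diracSF x E
  | n + 1 => fun x E => faIntegral (p2 x) fun y => p2n n y E

/-- The `n`-step transition function of CM3. -/
noncomputable def p3n : ℕ → ℝ → Set ℝ → ℝ
  | 0 => fun x E => diracSF x E
  | n + 1 => fun x E => faIntegral (p3 x) fun y => p3n n y E

/-- If `μ` is a finitely additive probability measure on the Borel σ-algebra of `[0,1]`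
invariant for CM1 and `μ((0,1)) = 1`, then `∫_{(0,1)} (1-x) μ(dx) = 0`. -/
theorem cm1_invariance_equation (μ : Set ℝ → ℝ)
    (hfa : IsFinAdd μ) (hpos : IsNonnegSF μ) (hprob : μ Set.univ = 1)
    (hIcc : μ (Set.Icc 0 1) = 1) (hIoo : μ (Set.Ioo 0 1) = 1)
    (hinv : ∀ E : Set ℝ, MeasurableSet E → faIntegral μ (fun x => p1 x E) = μ E) :
    faIntegral μ ((Set.Ioo (0:ℝ) 1).indicator fun x => 1 - x) = 0 := by
  -- μ vanishes on measurable sets disjoint from Ioo 0 1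
  have h0 : ∀ E : Set ℝ, MeasurableSet E → Disjoint E (Set.Ioo 0 1) → μ E = 0 := by
    intro E hE hd
    have h1 : μ (E ∪ Set.Ioo 0 1) = μ E + 1 := by
      rw [hfa.2 E (Set.Ioo 0 1) hE measurableSet_Ioo hd, hIoo]
    have h2 : μ ((E ∪ Set.Ioo 0 1) ∪ (E ∪ Set.Ioo 0 1)ᶜ) =
        μ (E ∪ Set.Ioo 0 1) + μ (E ∪ Set.Ioo 0 1)ᶜ :=
      hfa.2 _ _ (hE.union measurableSet_Ioo) (hE.union measurableSet_Ioo).compl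
        disjoint_compl_right
    rw [Set.union_compl_self, hprob] at h2
    have h3 := hpos (E ∪ Set.Ioo 0 1)ᶜ (hE.union measurableSet_Ioo).compl
    have h4 := hpos E hE
    linarith
  have hp1 : ∀ x : ℝ, p1 x ({0} : Set ℝ) = 1 - x := by
    intro x
    by_cases hx : x = 0 <;>
      simp [p1, diracSF, Set.indicator_apply, pow_eq_zero_iff, hx]
  have hkey : ∀ t ∈ Set.Ioi (0:ℝ),
      μ {x | t < (Set.Ioo (0:ℝ) 1).indicator (fun x => 1 - x) x}
        = μ {x | t < p1 x ({0} : Set ℝ)} := by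
    intro t ht
    simp only [Set.mem_Ioi] at ht
    have hR : {x : ℝ | t < p1 x ({0} : Set ℝ)} = Set.Iio (1 - t) := by
      ext x; simp only [Set.mem_setOf_eq, hp1 x, Set.mem_Iio]
      constructor <;> intro h <;> linarith
    by_cases h1 : t < 1
    · have hL : {x : ℝ | t < (Set.Ioo (0:ℝ) 1).indicator (fun x => 1 - x) x}
          = Set.Ioo 0 (1 - t) := by
        ext x
        simp only [Set.mem_setOf_eq, Set.mem_Ioo]
        constructor
        · intro h
          by_cases hx : x ∈ Set.Ioo (0:ℝ) 1
          · rw [Set.indicator_of_mem hx] at h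
            exact ⟨hx.1, by linarith⟩
          · rw [Set.indicator_of_notMem hx] at h
            linarith
        · rintro ⟨hx1, hx2⟩
          have hx : x ∈ Set.Ioo (0:ℝ) 1 := ⟨hx1, by linarith⟩
          rw [Set.indicator_of_mem hx]
          linarith
      have hsplit : Set.Iio (1 - t) = Set.Ioo 0 (1 - t) ∪ Set.Iic 0 := by
        ext x; simp [Set.mem_Iio, Set.mem_Ioo, Set.mem_Iic]
        constructor
        · intro h
          rcases le_or_gt x 0 with h' | h'
          · exact Or.inr h'
          · exact Or.inl ⟨h', h⟩
        · rintro (⟨h1, h2⟩ | h'); exact h2; linarith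
      have hdisj : Disjoint (Set.Ioo (0:ℝ) (1 - t)) (Set.Iic 0) := by
        rw [Set.disjoint_left]; intro x hx hx'
        exact absurd hx.1 (not_lt.mpr hx')
      have hIic : μ (Set.Iic 0) = 0 := by
        apply h0 _ measurableSet_Iic
        rw [Set.disjoint_left]; intro x hx hx'
        exact absurd hx'.1 (not_lt.mpr hx)
      rw [hL, hR, hsplit, hfa.2 _ _ measurableSet_Ioo measurableSet_Iic hdisj, hIic,
        add_zero]
    · push_neg at h1
      have hL : {x : ℝ | t < (Set.Ioo (0:ℝ) 1).indicator (fun x => 1 - x) x} = ∅ := by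
        ext x
        simp only [Set.mem_setOf_eq, Set.mem_empty_iff_false, iff_false, not_lt]
        by_cases hx : x ∈ Set.Ioo (0:ℝ) 1
        · rw [Set.indicator_of_mem hx]
          linarith [hx.1]
        · rw [Set.indicator_of_notMem hx]
          linarith
      rw [hL, hR, hfa.1]
      refine (h0 _ measurableSet_Iio ?_).symm
      rw [Set.disjoint_left]; intro x hx hx'
      simp [Set.mem_Iio] at hx
      linarith [hx'.1]
  have hkeyneg : ∀ t ∈ Set.Ioi (0:ℝ),
      μ {x | (Set.Ioo (0:ℝ) 1).indicator (fun x => 1 - x) x < -t}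
        = μ {x | p1 x ({0} : Set ℝ) < -t} := by
    intro t ht
    simp only [Set.mem_Ioi] at ht
    have hL : {x : ℝ | (Set.Ioo (0:ℝ) 1).indicator (fun x => 1 - x) x < -t} = ∅ := by
      ext x
      simp only [Set.mem_setOf_eq, Set.mem_empty_iff_false, iff_false, not_lt]
      by_cases hx : x ∈ Set.Ioo (0:ℝ) 1
      · rw [Set.indicator_of_mem hx]
        linarith [hx.2]
      · rw [Set.indicator_of_notMem hx]
        linarith
    have hR : {x : ℝ | p1 x ({0} : Set ℝ) < -t} = Set.Ioi (1 + t) := by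
      ext x; simp only [Set.mem_setOf_eq, hp1 x, Set.mem_Ioi]
      constructor <;> intro h <;> linarith
    rw [hL, hR, hfa.1]
    refine (h0 _ measurableSet_Ioi ?_).symm
    rw [Set.disjoint_left]; intro x hx hx'
    simp [Set.mem_Ioi] at hx
    linarith [hx'.2]
  have heq : faIntegral μ ((Set.Ioo (0:ℝ) 1).indicator fun x => 1 - x)
      = faIntegral μ (fun x => p1 x ({0} : Set ℝ)) := by
    unfold faIntegral
    congr 1
    · exact MeasureTheory.setIntegral_congr_fun measurableSet_Ioi hkey
    · exact MeasureTheory.setIntegral_congr_fun measurableSet_Ioi hkeyneg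
  rw [heq, hinv {0} (measurableSet_singleton 0)]
  apply h0 _ (measurableSet_singleton 0)
  rw [Set.disjoint_left]; intro x hx hx'
  simp at hx
  rw [hx] at hx'
  exact lt_irrefl 0 hx'.1
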